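/- Let N > p, let Q be a real N×p matrix with QᵀQ = I_p, and let D be a diagonal N×N matrix with nonnegative entries such that R = QᵀDQ is invertible; set S = QᵀD²Q. Then the maximum, over vectors τ ∈ ℝ^N with ‖τ‖ = 1 and Qᵀτ = 0, of the quadratic form (QᵀDτ)ᵀ R^{-2} (QᵀDτ) is attained and equals λ_max(R^{-1} S R^{-1}) − 1, where λ_max denotes the largest eigenvalue of a symmetric matrix. -/

import Mathlib

open Matrix BigOperators

lemma rayleigh_bound {n : ℕ} [NeZero n] {M : Matrix (Fin n) (Fin n) ℝ} (hM : M.IsHermitian)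
    (x : Fin n → ℝ) : x ⬝ᵥ M *ᵥ x ≤ (⨆ i, hM.eigenvalues i) * (x ⬝ᵥ x) := by
  set V : Matrix (Fin n) (Fin n) ℝ := (hM.eigenvectorUnitary : Matrix (Fin n) (Fin n) ℝ) with hVdef
  have hVmem : V ∈ Matrix.unitaryGroup (Fin n) ℝ := hM.eigenvectorUnitary.2
  have hst : star V = Vᵀ := by
    ext i j
    simp [Matrix.star_eq_conjTranspose, Matrix.conjTranspose_apply]
  have h1 : V * Vᵀ = 1 := by
    have := Matrix.mem_unitaryGroup_iff.mp hVmem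
    rwa [hst] at this
  have hspec : M = V * Matrix.diagonal hM.eigenvalues * Vᵀ := by
    have := hM.spectral_theorem
    rw [Unitary.conjStarAlgAut_apply, ← hVdef, hst] at this
    convert this using 3 <;> rfl
  set y : Fin n → ℝ := Vᵀ *ᵥ x with hy
  have key : ∀ z : Fin n → ℝ, x ⬝ᵥ V *ᵥ z = y ⬝ᵥ z := by
    intro z
    rw [Matrix.dotProduct_mulVec, hy, Matrix.mulVec_transpose]
  have h2 : x ⬝ᵥ M *ᵥ x = ∑ i, hM.eigenvalues i * (y i)^2 := by
    conv_lhs => rw [hspec]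
    rw [← Matrix.mulVec_mulVec, ← Matrix.mulVec_mulVec, key]
    simp only [dotProduct, Matrix.mulVec_diagonal]
    congr 1; ext i; ring
  have h3 : y ⬝ᵥ y = x ⬝ᵥ x := by
    have h4 : y ⬝ᵥ y = x ⬝ᵥ V *ᵥ y := (key y).symm
    rw [h4, hy, Matrix.mulVec_mulVec, h1, Matrix.one_mulVec]
  have hbdd : ∀ i, hM.eigenvalues i ≤ ⨆ j, hM.eigenvalues j := fun i =>
    le_ciSup (Set.Finite.bddAbove (Set.finite_range _)) i
  calc x ⬝ᵥ M *ᵥ x = ∑ i, hM.eigenvalues i * (y i)^2 := h2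
    _ ≤ ∑ i, (⨆ j, hM.eigenvalues j) * (y i)^2 := by
        apply Finset.sum_le_sum; intro i _; exact mul_le_mul_of_nonneg_right (hbdd i) (sq_nonneg _)
    _ = (⨆ j, hM.eigenvalues j) * (y ⬝ᵥ y) := by
        rw [← Finset.mul_sum]; congr 1; simp [dotProduct, sq]
    _ = _ := by rw [h3]

lemma dot_mulVec_left' {m k : ℕ} (M : Matrix (Fin m) (Fin k) ℝ) (v : Fin k → ℝ) (u : Fin m → ℝ) :
    (M *ᵥ v) ⬝ᵥ u = v ⬝ᵥ (Mᵀ *ᵥ u) := by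
  rw [dotProduct_comm, Matrix.dotProduct_mulVec, ← Matrix.mulVec_transpose,
    dotProduct_comm]

lemma dot_self_nonneg' {k : ℕ} (z : Fin k → ℝ) : 0 ≤ z ⬝ᵥ z :=
  Finset.sum_nonneg fun _ _ => mul_self_nonneg _

set_option maxHeartbeats 1000000 in
/-- the maximum over unit vectors τ orthogonal to the columns of Q
of the quadratic form (QᵀDτ)ᵀ R⁻² (QᵀDτ) is attained and equals
λ_max(R⁻¹ S R⁻¹) − 1, where R = QᵀDQ, S = QᵀD²Q. -/
theorem stmt_3 {N p : ℕ} (hp : 0 < p) (hNp : p < N)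
    (Q : Matrix (Fin N) (Fin p) ℝ) (hQ : Qᵀ * Q = 1)
    (d : Fin N → ℝ) (hd : ∀ i, 0 ≤ d i)
    (R S : Matrix (Fin p) (Fin p) ℝ)
    (hR : R = Qᵀ * Matrix.diagonal d * Q)
    (hS : S = Qᵀ * Matrix.diagonal d ^ 2 * Q)
    (hRinv : IsUnit R)
    (hU : (R⁻¹ * S * R⁻¹).IsHermitian) :
    IsGreatest
      {v : ℝ | ∃ τ : Fin N → ℝ, (∑ i, τ i ^ 2 = 1) ∧ Qᵀ *ᵥ τ = 0 ∧
        v = ((Qᵀ * Matrix.diagonal d) *ᵥ τ) ⬝ᵥ ((R⁻¹ * R⁻¹) *ᵥ ((Qᵀ * Matrix.diagonal d) *ᵥ τ))}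
      ((⨆ i, hU.eigenvalues i) - 1) := by
  classical
  have hpNe : Nonempty (Fin p) := ⟨⟨0, hp⟩⟩
  haveI : NeZero p := ⟨hp.ne'⟩
  have hdet : IsUnit R.det := (Matrix.isUnit_iff_isUnit_det R).mp hRinv
  have hRR : R * R⁻¹ = 1 := Matrix.mul_nonsing_inv R hdet
  have hR'R : R⁻¹ * R = 1 := Matrix.nonsing_inv_mul R hdet
  have hRsym : Rᵀ = R := by
    rw [hR]; simp [Matrix.transpose_mul, Matrix.diagonal_transpose, Matrix.mul_assoc]
  have hRisym : R⁻¹ᵀ = R⁻¹ := by rw [Matrix.transpose_nonsing_inv, hRsym]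
  set D := Matrix.diagonal d with hD
  set A := D * Q * R⁻¹ with hA
  set B := A - Q with hB
  have hAT : Aᵀ = R⁻¹ * (Qᵀ * D) := by
    rw [hA]
    simp [Matrix.transpose_mul, hD, Matrix.diagonal_transpose, hRisym, Matrix.mul_assoc]
  have hQA : Qᵀ * A = 1 := by
    rw [hA, ← Matrix.mul_assoc, ← Matrix.mul_assoc, ← hR, hRR]
  have hAQ : Aᵀ * Q = 1 := by
    have h := congrArg Matrix.transpose hQA
    rwa [Matrix.transpose_mul, Matrix.transpose_transpose, Matrix.transpose_one] at h
  have hQB : Qᵀ * B = 0 := by rw [hB, Matrix.mul_sub, hQA, hQ, sub_self]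
  have hAA : Aᵀ * A = R⁻¹ * S * R⁻¹ := by
    rw [hAT, hA, hS]
    simp [pow_two, Matrix.mul_assoc]
  have hBTB : Bᵀ * B = R⁻¹ * S * R⁻¹ - 1 := by
    rw [hB, Matrix.transpose_sub, Matrix.sub_mul, Matrix.mul_sub, Matrix.mul_sub,
      hAA, hAQ, hQA, hQ]
    abel
  -- form identity
  have hform : ∀ τ : Fin N → ℝ, Qᵀ *ᵥ τ = 0 →
      ((Qᵀ * D) *ᵥ τ) ⬝ᵥ ((R⁻¹ * R⁻¹) *ᵥ ((Qᵀ * D) *ᵥ τ)) = (Bᵀ *ᵥ τ) ⬝ᵥ (Bᵀ *ᵥ τ) := by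
    intro τ hτ
    have h1 : Bᵀ *ᵥ τ = R⁻¹ *ᵥ ((Qᵀ * D) *ᵥ τ) := by
      rw [hB, Matrix.transpose_sub, Matrix.sub_mulVec, hAT, hτ, sub_zero,
        ← Matrix.mulVec_mulVec]
    rw [h1, dot_mulVec_left' R⁻¹ ((Qᵀ * D) *ᵥ τ) (R⁻¹ *ᵥ ((Qᵀ * D) *ᵥ τ)), hRisym,
      Matrix.mulVec_mulVec]
    simp [Matrix.mulVec_mulVec, Matrix.mul_assoc]
  have hquad : ∀ x : Fin p → ℝ,
      (B *ᵥ x) ⬝ᵥ (B *ᵥ x) = x ⬝ᵥ ((R⁻¹ * S * R⁻¹) *ᵥ x) - x ⬝ᵥ x := by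
    intro x
    rw [dot_mulVec_left' B x (B *ᵥ x), Matrix.mulVec_mulVec, hBTB, Matrix.sub_mulVec,
      dotProduct_sub, Matrix.one_mulVec]
  obtain ⟨i₀, hi₀⟩ := Finite.exists_max hU.eigenvalues
  have hlam_eq : (⨆ i, hU.eigenvalues i) = hU.eigenvalues i₀ :=
    le_antisymm (ciSup_le hi₀) (le_ciSup (Set.Finite.bddAbove (Set.finite_range _)) i₀)
  set lam := hU.eigenvalues i₀ with hlamdef
  set v₀ : Fin p → ℝ := ⇑(hU.eigenvectorBasis i₀) with hv₀
  have hUv₀ : (R⁻¹ * S * R⁻¹) *ᵥ v₀ = lam • v₀ := hU.mulVec_eigenvectorBasis i₀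
  have hv₀norm : v₀ ⬝ᵥ v₀ = 1 := by
    have h := hU.eigenvectorBasis.orthonormal.1 i₀
    have h2 : (inner ℝ (hU.eigenvectorBasis i₀) (hU.eigenvectorBasis i₀) : ℝ) = 1 := by
      rw [real_inner_self_eq_norm_sq, h]; norm_num
    rw [PiLp.inner_apply] at h2
    simpa [dotProduct, RCLike.inner_apply, conj_trivial, hv₀, sq] using h2
  have hBv : (B *ᵥ v₀) ⬝ᵥ (B *ᵥ v₀) = lam - 1 := by
    rw [hquad, hUv₀, dotProduct_smul, hv₀norm]
    simp
  have hlam_ge : 1 ≤ lam := by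
    have h := dot_self_nonneg' (B *ᵥ v₀)
    rw [hBv] at h; linarith
  -- upper bound, in terms of B
  have hub : ∀ τ : Fin N → ℝ, (∑ i, τ i ^ 2 = 1) → Qᵀ *ᵥ τ = 0 →
      (Bᵀ *ᵥ τ) ⬝ᵥ (Bᵀ *ᵥ τ) ≤ lam - 1 := by
    intro τ hτn hτo
    set y := Bᵀ *ᵥ τ with hy
    have hyy : 0 ≤ y ⬝ᵥ y := dot_self_nonneg' y
    have hττ : τ ⬝ᵥ τ = 1 := by
      rw [dotProduct]
      simpa [sq] using hτn
    have h1 : y ⬝ᵥ y = τ ⬝ᵥ (B *ᵥ y) := by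
      conv_lhs => rw [hy, dot_mulVec_left' Bᵀ τ y, Matrix.transpose_transpose]
    have hCS : (y ⬝ᵥ y) ^ 2 ≤ (τ ⬝ᵥ τ) * ((B *ᵥ y) ⬝ᵥ (B *ᵥ y)) := by
      rw [h1]
      have h2 := Finset.sum_mul_sq_le_sq_mul_sq Finset.univ τ (B *ᵥ y)
      simpa [dotProduct, sq, mul_assoc, mul_comm, mul_left_comm] using h2
    have hray := rayleigh_bound hU y
    rw [hlam_eq] at hray
    have hBy : (B *ᵥ y) ⬝ᵥ (B *ᵥ y) ≤ (lam - 1) * (y ⬝ᵥ y) := by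
      rw [hquad y]
      nlinarith [hray]
    rcases eq_or_lt_of_le hyy with h0 | hpos
    · rw [← h0]; linarith
    · have h3 : (y ⬝ᵥ y) * (y ⬝ᵥ y) ≤ (lam - 1) * (y ⬝ᵥ y) := by nlinarith [hCS, hBy, hττ]
      exact le_of_mul_le_mul_right h3 hpos
  -- normalization helper
  have hnorm : ∀ z : Fin N → ℝ, 0 < z ⬝ᵥ z →
      (∑ i, ((Real.sqrt (z ⬝ᵥ z))⁻¹ • z) i ^ 2 = 1) := by
    intro z hz
    have hs : Real.sqrt (z ⬝ᵥ z) ^ 2 = z ⬝ᵥ z := Real.sq_sqrt hz.le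
    have hsne : Real.sqrt (z ⬝ᵥ z) ≠ 0 := by positivity
    have : ∑ i, ((Real.sqrt (z ⬝ᵥ z))⁻¹ • z) i ^ 2
        = ((Real.sqrt (z ⬝ᵥ z))⁻¹) ^ 2 * ∑ i, z i ^ 2 := by
      rw [Finset.mul_sum]; congr 1; ext i; simp [Pi.smul_apply]; ring
    rw [this]
    have hzz : ∑ i, z i ^ 2 = z ⬝ᵥ z := by simp [dotProduct, sq]
    rw [hzz, inv_pow, hs]
    exact inv_mul_cancel₀ hz.ne'
  constructor
  · -- membership
    rcases eq_or_lt_of_le hlam_ge with heq | hlt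
    · -- lam = 1 : pick any unit vector in ker Qᵀ
      have hker : LinearMap.ker (Matrix.mulVecLin Qᵀ) ≠ ⊥ := by
        intro hbot
        have hinj := LinearMap.ker_eq_bot.mp hbot
        have hle := LinearMap.finrank_le_finrank_of_injective hinj
        simp only [Module.finrank_fin_fun] at hle
        omega
      obtain ⟨τ₀, hmem, hne⟩ := Submodule.exists_mem_ne_zero_of_ne_bot hker
      have hτ₀orth : Qᵀ *ᵥ τ₀ = 0 := by
        have h := LinearMap.mem_ker.mp hmem
        rwa [Matrix.mulVecLin_apply] at h
      have hτ₀pos : 0 < τ₀ ⬝ᵥ τ₀ :=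
        lt_of_le_of_ne (dot_self_nonneg' τ₀)
          (fun h => hne (dotProduct_self_eq_zero.mp h.symm))
      set τ := (Real.sqrt (τ₀ ⬝ᵥ τ₀))⁻¹ • τ₀ with hτdef
      have hτn : ∑ i, τ i ^ 2 = 1 := hnorm τ₀ hτ₀pos
      have hτo : Qᵀ *ᵥ τ = 0 := by
        rw [hτdef, Matrix.mulVec_smul, hτ₀orth, smul_zero]
      refine ⟨τ, hτn, hτo, ?_⟩
      rw [hform τ hτo]
      have h1 := hub τ hτn hτo
      have h2 := dot_self_nonneg' (Bᵀ *ᵥ τ)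
      rw [hlam_eq]
      linarith [heq ▸ h1]
    · -- lam > 1
      set z := B *ᵥ v₀ with hz
      have hzpos : 0 < z ⬝ᵥ z := by rw [hz, hBv]; linarith
      set s := Real.sqrt (z ⬝ᵥ z) with hs
      have hs2 : s ^ 2 = z ⬝ᵥ z := Real.sq_sqrt hzpos.le
      have hsne : s ≠ 0 := by positivity
      set τ := s⁻¹ • z with hτdef
      have hτn : ∑ i, τ i ^ 2 = 1 := hnorm z hzpos
      have hτo : Qᵀ *ᵥ τ = 0 := by
        rw [hτdef, Matrix.mulVec_smul, hz, Matrix.mulVec_mulVec, hQB, Matrix.zero_mulVec,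
          smul_zero]
      refine ⟨τ, hτn, hτo, ?_⟩
      rw [hform τ hτo]
      have hBτ : Bᵀ *ᵥ τ = (s⁻¹ * (lam - 1)) • v₀ := by
        rw [hτdef, Matrix.mulVec_smul, hz, Matrix.mulVec_mulVec, hBTB, Matrix.sub_mulVec,
          hUv₀, Matrix.one_mulVec]
        ext i
        simp
        ring
      rw [hBτ, smul_dotProduct, dotProduct_smul, hv₀norm, hlam_eq]
      rw [smul_eq_mul, smul_eq_mul, mul_one]
      have hinv : s⁻¹ ^ 2 = (lam - 1)⁻¹ := by rw [inv_pow, hs2, hBv]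
      have hmul : (s⁻¹ * (lam - 1)) * (s⁻¹ * (lam - 1)) = s⁻¹ ^ 2 * (lam - 1)^2 := by ring
      have hne : lam - 1 ≠ 0 := by linarith
      rw [hmul, hinv]
      field_simp
  · -- upper bound
    rintro v ⟨τ, hτn, hτo, rfl⟩
    rw [hform τ hτo, hlam_eq]
    exact hub τ hτn hτo
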